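/- Let Q ∈ ℝ^{m×t}, U ∈ ℝ^{m×s} with ‖I - QᵀQ‖₂ ≤ ω < 1 and ‖U‖₂ ≤ 2. Suppose Ω = UᵀU + ΔΩ, Y = QᵀU + ΔY, and YdᵀYd = Ω - YᵀY + F + C, with ‖ΔΩ‖₂ ≤ δ₁‖U‖₂², ‖ΔY‖₂ ≤ δ₂‖U‖₂, ‖F‖₂ ≤ δ₃‖U‖₂², ‖C‖₂ ≤ δ₄‖U‖₂². Then YdᵀYd = Uᵀ(I - QQᵀ)(I - QQᵀ)U + M̃ with ‖M̃‖₂ ≤ 4(δ₁ + 2√2 δ₂ + δ₃ + δ₄ + 2ω). -/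

import Mathlib

open Matrix
open scoped RealInnerProductSpace

/-- Spectral norm (largest singular value) of a real matrix. -/
noncomputable def sn {m n : ℕ} (A : Matrix (Fin m) (Fin n) ℝ) : ℝ :=
  sSup {c | ∃ x : EuclideanSpace ℝ (Fin n), ‖x‖ = 1 ∧
    c = ‖(WithLp.equiv 2 (Fin m → ℝ)).symm (A.mulVec ((WithLp.equiv 2 (Fin n → ℝ)) x))‖}

/-- Smallest singular value of a real matrix. -/
noncomputable def smin {m n : ℕ} (A : Matrix (Fin m) (Fin n) ℝ) : ℝ :=
  sInf {c | ∃ x : EuclideanSpace ℝ (Fin n), ‖x‖ = 1 ∧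
    c = ‖(WithLp.equiv 2 (Fin m → ℝ)).symm (A.mulVec ((WithLp.equiv 2 (Fin n → ℝ)) x))‖}

/-- Smallest eigenvalue (Rayleigh quotient infimum) of a square real matrix. -/
noncomputable def lmin {n : ℕ} (A : Matrix (Fin n) (Fin n) ℝ) : ℝ :=
  sInf {c | ∃ x : EuclideanSpace ℝ (Fin n), ‖x‖ = 1 ∧
    c = (inner ℝ x ((WithLp.equiv 2 (Fin n → ℝ)).symm (A.mulVec ((WithLp.equiv 2 (Fin n → ℝ)) x))) : ℝ)}

namespace GramAux
variable {m n p : ℕ}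

lemma sn_eq (A : Matrix (Fin m) (Fin n) ℝ) :
    sn A = sSup {c | ∃ x : EuclideanSpace ℝ (Fin n), ‖x‖ = 1 ∧ c = ‖Matrix.toEuclideanLin A x‖} := rfl

lemma sn_nonneg (A : Matrix (Fin m) (Fin n) ℝ) : 0 ≤ sn A :=
  Real.sSup_nonneg (by rintro c ⟨x, hx, rfl⟩; exact norm_nonneg _)

lemma sn_le {A : Matrix (Fin m) (Fin n) ℝ} {c : ℝ} (hc : 0 ≤ c)
    (h : ∀ x : EuclideanSpace ℝ (Fin n), ‖x‖ = 1 → ‖Matrix.toEuclideanLin A x‖ ≤ c) :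
    sn A ≤ c := by
  rw [sn_eq]; exact Real.sSup_le (by rintro _ ⟨x, hx, rfl⟩; exact h x hx) hc

lemma norm_le_sn (A : Matrix (Fin m) (Fin n) ℝ) {x : EuclideanSpace ℝ (Fin n)} (hx : ‖x‖ = 1) :
    ‖Matrix.toEuclideanLin A x‖ ≤ sn A := by
  rw [sn_eq]
  refine le_csSup ⟨‖LinearMap.toContinuousLinearMap (Matrix.toEuclideanLin A)‖, ?_⟩ ⟨x, hx, rfl⟩
  rintro _ ⟨z, hz, rfl⟩
  have := (LinearMap.toContinuousLinearMap (Matrix.toEuclideanLin A)).le_opNorm z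
  simpa [hz] using this

lemma norm_apply_le (A : Matrix (Fin m) (Fin n) ℝ) (x : EuclideanSpace ℝ (Fin n)) :
    ‖Matrix.toEuclideanLin A x‖ ≤ sn A * ‖x‖ := by
  rcases eq_or_ne x 0 with rfl | hx
  · simp
  · have hnx : (0:ℝ) < ‖x‖ := norm_pos_iff.2 hx
    have h1 : ‖(‖x‖⁻¹ • x : EuclideanSpace ℝ (Fin n))‖ = 1 := by
      rw [norm_smul, norm_inv, norm_norm]; field_simp
    have h2 := norm_le_sn A h1
    rw [_root_.map_smul, norm_smul, norm_inv, norm_norm] at h2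
    calc ‖Matrix.toEuclideanLin A x‖ = ‖x‖ * (‖x‖⁻¹ * ‖Matrix.toEuclideanLin A x‖) := by field_simp
    _ ≤ ‖x‖ * sn A := mul_le_mul_of_nonneg_left h2 hnx.le
    _ = sn A * ‖x‖ := mul_comm _ _

lemma f_mul (A : Matrix (Fin m) (Fin n) ℝ) (B : Matrix (Fin n) (Fin p) ℝ) (x : EuclideanSpace ℝ (Fin p)) :
    Matrix.toEuclideanLin (A * B) x = Matrix.toEuclideanLin A (Matrix.toEuclideanLin B x) := by
  simp [Matrix.toEuclideanLin_apply, Matrix.mulVec_mulVec]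

lemma f_add (A B : Matrix (Fin m) (Fin n) ℝ) (x : EuclideanSpace ℝ (Fin n)) :
    Matrix.toEuclideanLin (A + B) x = Matrix.toEuclideanLin A x + Matrix.toEuclideanLin B x := by
  rw [map_add, LinearMap.add_apply]

lemma f_sub (A B : Matrix (Fin m) (Fin n) ℝ) (x : EuclideanSpace ℝ (Fin n)) :
    Matrix.toEuclideanLin (A - B) x = Matrix.toEuclideanLin A x - Matrix.toEuclideanLin B x := by
  rw [map_sub, LinearMap.sub_apply]

lemma f_one (x : EuclideanSpace ℝ (Fin n)) :
    Matrix.toEuclideanLin (1 : Matrix (Fin n) (Fin n) ℝ) x = x := by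
  simp [Matrix.toEuclideanLin_apply, Matrix.one_mulVec]

lemma inner_transpose (A : Matrix (Fin m) (Fin n) ℝ) (w : EuclideanSpace ℝ (Fin m))
    (z : EuclideanSpace ℝ (Fin n)) :
    ⟪Matrix.toEuclideanLin Aᵀ w, z⟫ = ⟪w, Matrix.toEuclideanLin A z⟫ := by
  simp only [Matrix.toEuclideanLin_apply, PiLp.inner_apply, RCLike.inner_apply, starRingEnd_apply,
    star_trivial]
  show z.ofLp ⬝ᵥ (Aᵀ *ᵥ w.ofLp) = (A *ᵥ z.ofLp) ⬝ᵥ w.ofLp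
  rw [mulVec_transpose, dotProduct_comm, ← dotProduct_mulVec, dotProduct_comm]

lemma gram (B : Matrix (Fin m) (Fin n) ℝ) (z : EuclideanSpace ℝ (Fin n)) :
    ⟪z, Matrix.toEuclideanLin (Bᵀ * B) z⟫ = ‖Matrix.toEuclideanLin B z‖ ^ 2 := by
  rw [f_mul, real_inner_comm, inner_transpose, real_inner_self_eq_norm_sq]

lemma quad_le (A : Matrix (Fin n) (Fin n) ℝ) (z : EuclideanSpace ℝ (Fin n)) :
    |⟪z, Matrix.toEuclideanLin A z⟫| ≤ sn A * ‖z‖ ^ 2 := by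
  calc |⟪z, Matrix.toEuclideanLin A z⟫| ≤ ‖z‖ * ‖Matrix.toEuclideanLin A z‖ :=
        abs_real_inner_le_norm _ _
  _ ≤ ‖z‖ * (sn A * ‖z‖) := mul_le_mul_of_nonneg_left (norm_apply_le A z) (norm_nonneg z)
  _ = sn A * ‖z‖ ^ 2 := by ring

lemma sn_le_of_quadratic {M : Matrix (Fin n) (Fin n) ℝ} (hM : Mᵀ = M) {c : ℝ} (hc : 0 ≤ c)
    (h : ∀ z : EuclideanSpace ℝ (Fin n), ‖z‖ = 1 → |⟪z, Matrix.toEuclideanLin M z⟫| ≤ c) :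
    sn M ≤ c := by
  have hq : ∀ z : EuclideanSpace ℝ (Fin n), |⟪z, Matrix.toEuclideanLin M z⟫| ≤ c * ‖z‖ ^ 2 := by
    intro z
    rcases eq_or_ne z 0 with rfl | hz
    · simp
    · have hnz : (0:ℝ) < ‖z‖ := norm_pos_iff.2 hz
      have h1 : ‖(‖z‖⁻¹ • z : EuclideanSpace ℝ (Fin n))‖ = 1 := by
        rw [norm_smul, norm_inv, norm_norm]; field_simp
      have h2 := h _ h1
      have e1 : ⟪(‖z‖⁻¹ • z : EuclideanSpace ℝ (Fin n)),
          Matrix.toEuclideanLin M (‖z‖⁻¹ • z)⟫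
          = ‖z‖⁻¹ * (‖z‖⁻¹ * ⟪z, Matrix.toEuclideanLin M z⟫) := by
        rw [_root_.map_smul, real_inner_smul_left, real_inner_smul_right]
      rw [e1, abs_mul, abs_mul, abs_inv, abs_norm] at h2
      have h3 : ‖z‖ * ‖z‖ * (‖z‖⁻¹ * (‖z‖⁻¹ * |⟪z, Matrix.toEuclideanLin M z⟫|))
          ≤ ‖z‖ * ‖z‖ * c := mul_le_mul_of_nonneg_left h2 (by positivity)
      have h4 : ‖z‖ * ‖z‖ * (‖z‖⁻¹ * (‖z‖⁻¹ * |⟪z, Matrix.toEuclideanLin M z⟫|))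
          = |⟪z, Matrix.toEuclideanLin M z⟫| := by field_simp
      rw [h4] at h3
      calc |⟪z, Matrix.toEuclideanLin M z⟫| ≤ ‖z‖ * ‖z‖ * c := h3
      _ = c * ‖z‖ ^ 2 := by ring
  have hsym : ∀ a b : EuclideanSpace ℝ (Fin n),
      ⟪Matrix.toEuclideanLin M a, b⟫ = ⟪a, Matrix.toEuclideanLin M b⟫ := by
    intro a b
    have := inner_transpose M a b
    rw [hM] at this
    exact this
  apply sn_le hc
  intro x hx
  set f := Matrix.toEuclideanLin M with hf
  rcases eq_or_ne (f x) 0 with h0 | h0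
  · rw [h0]; simpa using hc
  · have hnfx : (0:ℝ) < ‖f x‖ := norm_pos_iff.2 h0
    set z : EuclideanSpace ℝ (Fin n) := ‖f x‖⁻¹ • f x with hzdef
    have hz1 : ‖z‖ = 1 := by rw [hzdef, norm_smul, norm_inv, norm_norm]; field_simp
    have hxz : ⟪x, f z⟫ = ⟪z, f x⟫ := by rw [real_inner_comm]; exact hsym z x
    have key : ⟪z + x, f (z + x)⟫ - ⟪z - x, f (z - x)⟫ = 4 * ⟪z, f x⟫ := by
      rw [map_add, map_sub, inner_add_left, inner_add_right, inner_add_right,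
        inner_sub_left, inner_sub_right, inner_sub_right, hxz]
      ring
    have hzfx : ⟪z, f x⟫ = ‖f x‖ := by
      rw [hzdef, real_inner_smul_left, real_inner_self_eq_norm_sq, sq]
      field_simp
    have hpar : ‖z + x‖ ^ 2 + ‖z - x‖ ^ 2 = 2 * (‖z‖ ^ 2 + ‖x‖ ^ 2) := by
      have := parallelogram_law_with_norm ℝ z x
      exact this
    have hb1 := hq (z + x)
    have hb2 := hq (z - x)
    have h5 : 4 * ‖f x‖ ≤ 4 * c := by
      have l1 : ⟪z + x, f (z + x)⟫ ≤ c * ‖z + x‖ ^ 2 := le_trans (le_abs_self _) hb1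
      have l2 : -(c * ‖z - x‖ ^ 2) ≤ ⟪z - x, f (z - x)⟫ := neg_le_of_abs_le hb2
      have : 4 * ⟪z, f x⟫ ≤ c * ‖z + x‖ ^ 2 + c * ‖z - x‖ ^ 2 := by
        rw [← key]; linarith
      rw [hzfx] at this
      have : c * ‖z + x‖ ^ 2 + c * ‖z - x‖ ^ 2 = 4 * c := by
        have : c * (‖z + x‖ ^ 2 + ‖z - x‖ ^ 2) = c * (2 * (1 + 1)) := by
          rw [hpar, hz1, hx]; norm_num
        nlinarith [this]
      linarith [‹4 * ‖f x‖ ≤ c * ‖z + x‖ ^ 2 + c * ‖z - x‖ ^ 2›]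
    linarith

end GramAux

set_option maxHeartbeats 2000000 in
open GramAux in
theorem gram_decomposition_of_Yd
    {m t s : ℕ} (Q : Matrix (Fin m) (Fin t) ℝ)
    (U : Matrix (Fin m) (Fin s) ℝ)
    (Ω ΔΩ Yd F C : Matrix (Fin s) (Fin s) ℝ)
    (Y ΔY : Matrix (Fin t) (Fin s) ℝ)
    (ω δ1 δ2 δ3 δ4 : ℝ)
    (hω0 : 0 ≤ ω) (hω1 : ω < 1)
    (hQ : sn ((1 : Matrix (Fin t) (Fin t) ℝ) - Qᵀ * Q) ≤ ω)
    (hU : sn U ≤ 2)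
    (hΩ : Ω = Uᵀ * U + ΔΩ) (hΔΩ : sn ΔΩ ≤ δ1 * sn U ^ 2)
    (hY : Y = Qᵀ * U + ΔY) (hΔY : sn ΔY ≤ δ2 * sn U)
    (hYd : Ydᵀ * Yd = Ω - Yᵀ * Y + F + C)
    (hF : sn F ≤ δ3 * sn U ^ 2) (hC : sn C ≤ δ4 * sn U ^ 2)
    (hδ1 : δ1 ∈ Set.Ioo (0:ℝ) 1) (hδ2 : δ2 ∈ Set.Ioo (0:ℝ) 1)
    (hδ3 : δ3 ∈ Set.Ioo (0:ℝ) 1) (hδ4 : δ4 ∈ Set.Ioo (0:ℝ) 1) :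
    ∃ M : Matrix (Fin s) (Fin s) ℝ,
      Ydᵀ * Yd
        = Uᵀ * ((1 : Matrix (Fin m) (Fin m) ℝ) - Q * Qᵀ)
            * ((1 : Matrix (Fin m) (Fin m) ℝ) - Q * Qᵀ) * U + M
      ∧ sn M ≤ 4 * (δ1 + 2 * Real.sqrt 2 * δ2 + δ3 + δ4 + 2 * ω) := by
  have hs2 : Real.sqrt 2 ^ 2 = 2 := Real.sq_sqrt (by norm_num)
  have hs2n : (0:ℝ) ≤ Real.sqrt 2 := Real.sqrt_nonneg 2
  have hs2g1 : (1:ℝ) ≤ Real.sqrt 2 := by nlinarith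
  have hsnU : 0 ≤ sn U := sn_nonneg U
  have hU2 : sn U ^ 2 ≤ 4 := by nlinarith only [hsnU, hU]
  obtain ⟨P, hP⟩ : ∃ P' : Matrix (Fin m) (Fin m) ℝ, P' = (1 : Matrix (Fin m) (Fin m) ℝ) - Q * Qᵀ := ⟨_, rfl⟩
  rw [← hP]
  have hPt : Pᵀ = P := by
    rw [hP]
    simp [Matrix.transpose_sub, Matrix.transpose_mul, Matrix.transpose_one,
      Matrix.transpose_transpose]
  have hc0 : (0:ℝ) ≤ 4 * (δ1 + 2 * Real.sqrt 2 * δ2 + δ3 + δ4 + 2 * ω) := by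
    have h1 : 0 ≤ Real.sqrt 2 * δ2 := mul_nonneg hs2n hδ2.1.le
    nlinarith [hδ1.1.le, hδ3.1.le, hδ4.1.le]
  refine ⟨Ydᵀ * Yd - Uᵀ * P * P * U, by abel, ?_⟩
  have hMt : (Ydᵀ * Yd - Uᵀ * P * P * U)ᵀ = Ydᵀ * Yd - Uᵀ * P * P * U := by
    simp [Matrix.transpose_sub, Matrix.transpose_mul, Matrix.transpose_transpose, hPt,
      Matrix.mul_assoc]
  apply sn_le_of_quadratic hMt hc0
  intro x hx
  have hx2 : ‖x‖ ^ 2 = 1 := by rw [hx]; norm_num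
  -- abbreviations
  obtain ⟨u, hu⟩ : ∃ u' : EuclideanSpace ℝ (Fin m), u' = Matrix.toEuclideanLin U x := ⟨_, rfl⟩
  obtain ⟨v, hv⟩ : ∃ v' : EuclideanSpace ℝ (Fin t), v' = Matrix.toEuclideanLin Qᵀ u := ⟨_, rfl⟩
  obtain ⟨y, hy⟩ : ∃ y' : EuclideanSpace ℝ (Fin t), y' = Matrix.toEuclideanLin ΔY x := ⟨_, rfl⟩
  obtain ⟨r, hrdef⟩ : ∃ r' : ℝ,
      r' = ⟪v, Matrix.toEuclideanLin ((1 : Matrix (Fin t) (Fin t) ℝ) - Qᵀ * Q) v⟫ := ⟨_, rfl⟩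
  -- basic norm bounds
  have hun : ‖u‖ ≤ 2 := by
    have h := norm_apply_le U x
    rw [← hu, hx, mul_one] at h
    linarith
  have husq : ‖u‖ ^ 2 ≤ 4 := by nlinarith only [hun, norm_nonneg u]
  have hyb : ‖y‖ ≤ 2 * δ2 := by
    have h := norm_apply_le ΔY x
    rw [← hy, hx, mul_one] at h
    nlinarith only [h, hΔY, hδ2.1.le, hU, hsnU]
  have hr : |r| ≤ ω * ‖v‖ ^ 2 := by
    rw [hrdef]
    calc |⟪v, Matrix.toEuclideanLin ((1 : Matrix (Fin t) (Fin t) ℝ) - Qᵀ * Q) v⟫|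
        ≤ sn ((1 : Matrix (Fin t) (Fin t) ℝ) - Qᵀ * Q) * ‖v‖ ^ 2 := quad_le _ v
    _ ≤ ω * ‖v‖ ^ 2 := mul_le_mul_of_nonneg_right hQ (sq_nonneg _)
  -- inner product identities
  have hvu : ⟪u, Matrix.toEuclideanLin Q v⟫ = ‖v‖ ^ 2 := by
    rw [← inner_transpose Q u v, ← hv, real_inner_self_eq_norm_sq]
  have hQv : ‖Matrix.toEuclideanLin Q v‖ ^ 2 = ‖v‖ ^ 2 - r := by
    have hga := gram Q v
    have h9 : Qᵀ * Q = 1 - ((1 : Matrix (Fin t) (Fin t) ℝ) - Qᵀ * Q) := (sub_sub_cancel _ _).symm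
    rw [h9, f_sub, f_one, inner_sub_right, real_inner_self_eq_norm_sq, ← hrdef] at hga
    linarith [hga]
  -- ‖v‖ bounds
  have hvsq : ‖v‖ ^ 2 ≤ (1 + ω) * ‖u‖ ^ 2 := by
    rcases eq_or_lt_of_le (norm_nonneg v) with h0 | h0
    · rw [← h0]
      have : ((0:ℝ)) ^ 2 = 0 := by norm_num
      rw [this]
      positivity
    · have hc1 : ‖v‖ ^ 2 ≤ ‖u‖ * ‖Matrix.toEuclideanLin Q v‖ := by
        rw [← hvu]; exact real_inner_le_norm u _
      have h4 : ‖v‖ ^ 2 * ‖v‖ ^ 2 ≤ (‖u‖ * ‖Matrix.toEuclideanLin Q v‖) * (‖u‖ * ‖Matrix.toEuclideanLin Q v‖) :=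
        mul_le_mul hc1 hc1 (sq_nonneg _) (mul_nonneg (norm_nonneg _) (norm_nonneg _))
      nlinarith only [h4, hQv, (abs_le.mp hr).1, mul_pos h0 h0, sq_nonneg ‖u‖, hω0]
  have hv8 : ‖v‖ ^ 2 ≤ 8 := by nlinarith only [hvsq, hω1.le, norm_nonneg u, hω0, hun]
  have hvn : ‖v‖ ≤ 2 * Real.sqrt 2 := by nlinarith only [hv8, norm_nonneg v, hs2g1, hs2]
  have hwv : ω * ‖v‖ ^ 2 ≤ 8 * ω := by nlinarith only [hω0, hv8]
  -- quadratic form of the base term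
  have hbase2 : Uᵀ * P * P * U = (P * U)ᵀ * (P * U) := by
    simp only [Matrix.transpose_mul, hPt, Matrix.mul_assoc]
  have h5 : Matrix.toEuclideanLin (P * U) x = u - Matrix.toEuclideanLin Q v := by
    rw [f_mul, ← hu, hP, f_sub, f_one, f_mul, ← hv]
  have hbasequad : ⟪x, Matrix.toEuclideanLin (Uᵀ * P * P * U) x⟫ = ‖u‖ ^ 2 - ‖v‖ ^ 2 - r := by
    rw [hbase2, gram (P * U) x, h5, norm_sub_sq_real, hvu, hQv]
    ring
  -- gram-side expansion
  have hYx : Matrix.toEuclideanLin Y x = v + y := by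
    rw [hY, f_add, f_mul, ← hu, ← hv, ← hy]
  have hgram : ⟪x, Matrix.toEuclideanLin (Ydᵀ * Yd) x⟫
      = ‖u‖ ^ 2 + ⟪x, Matrix.toEuclideanLin ΔΩ x⟫ + ⟪x, Matrix.toEuclideanLin F x⟫
        + ⟪x, Matrix.toEuclideanLin C x⟫ - ‖v + y‖ ^ 2 := by
    rw [hYd, hΩ, f_add, inner_add_right, f_add, inner_add_right, f_sub, inner_sub_right,
      f_add, inner_add_right, gram U x, gram Y x, hYx, ← hu]
    ring
  have hg0 : 0 ≤ ⟪x, Matrix.toEuclideanLin (Ydᵀ * Yd) x⟫ := by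
    rw [gram Yd x]; positivity
  have hqsplit : ⟪x, Matrix.toEuclideanLin (Ydᵀ * Yd - Uᵀ * P * P * U) x⟫
      = ⟪x, Matrix.toEuclideanLin (Ydᵀ * Yd) x⟫ - (‖u‖ ^ 2 - ‖v‖ ^ 2 - r) := by
    rw [f_sub, inner_sub_right, hbasequad]
  -- scalar bounds on perturbation quadratic forms
  have he1 : |⟪x, Matrix.toEuclideanLin ΔΩ x⟫| ≤ 4 * δ1 := by
    have h := quad_le ΔΩ x
    rw [hx2, mul_one] at h
    nlinarith only [h, hΔΩ, hU2, hδ1.1.le]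
  have he3 : |⟪x, Matrix.toEuclideanLin F x⟫| ≤ 4 * δ3 := by
    have h := quad_le F x
    rw [hx2, mul_one] at h
    nlinarith only [h, hF, hU2, hδ3.1.le]
  have he4 : |⟪x, Matrix.toEuclideanLin C x⟫| ≤ 4 * δ4 := by
    have h := quad_le C x
    rw [hx2, mul_one] at h
    nlinarith only [h, hC, hU2, hδ4.1.le]
  have hvyb : |⟪v, y⟫| ≤ ‖v‖ * ‖y‖ := abs_real_inner_le_norm v y
  have hexp : ‖v + y‖ ^ 2 = ‖v‖ ^ 2 + 2 * ⟪v, y⟫ + ‖y‖ ^ 2 := norm_add_sq_real v y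
  have hA : (0:ℝ) ≤ 2 * Real.sqrt 2 - δ2 := by nlinarith only [hs2g1, hδ2.2.le]
  have hvy2 : ‖v‖ * ‖y‖ ≤ 4 * Real.sqrt 2 * δ2 := by
    nlinarith only [hvn, hyb, norm_nonneg v, norm_nonneg y, hδ2.1.le, hs2n]
  rw [hqsplit, abs_le]
  -- replace all heavy terms by opaque scalars
  obtain ⟨g, hg⟩ : ∃ g' : ℝ, g' = ⟪x, Matrix.toEuclideanLin (Ydᵀ * Yd) x⟫ := ⟨_, rfl⟩
  rw [← hg] at hgram hg0 ⊢
  obtain ⟨E1, hE1⟩ : ∃ E' : ℝ, E' = ⟪x, Matrix.toEuclideanLin ΔΩ x⟫ := ⟨_, rfl⟩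
  rw [← hE1] at hgram he1
  obtain ⟨E3, hE3⟩ : ∃ E' : ℝ, E' = ⟪x, Matrix.toEuclideanLin F x⟫ := ⟨_, rfl⟩
  rw [← hE3] at hgram he3
  obtain ⟨E4, hE4⟩ : ∃ E' : ℝ, E' = ⟪x, Matrix.toEuclideanLin C x⟫ := ⟨_, rfl⟩
  rw [← hE4] at hgram he4
  obtain ⟨ip, hip⟩ : ∃ i' : ℝ, i' = ⟪v, y⟫ := ⟨_, rfl⟩
  rw [← hip] at hexp hvyb
  obtain ⟨nw, hnw⟩ : ∃ k : ℝ, k = ‖v + y‖ := ⟨_, rfl⟩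
  rw [← hnw] at hgram hexp
  obtain ⟨a, ha⟩ : ∃ a' : ℝ, a' = ‖v‖ := ⟨_, rfl⟩
  have ha0 : 0 ≤ a := by rw [ha]; exact norm_nonneg v
  rw [← ha] at hr hvn hv8 hwv hvyb hexp hvy2 ⊢
  obtain ⟨b, hb⟩ : ∃ b' : ℝ, b' = ‖u‖ := ⟨_, rfl⟩
  rw [← hb] at husq hgram ⊢
  obtain ⟨ny, hny⟩ : ∃ n' : ℝ, n' = ‖y‖ := ⟨_, rfl⟩
  have hny0 : 0 ≤ ny := by rw [hny]; exact norm_nonneg y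
  rw [← hny] at hyb hvyb hexp hvy2
  clear hg hE1 hE3 hE4 hip hnw ha hb hny hqsplit hbasequad hQv hvu h5 hYx hu hv hy hrdef hvsq
  constructor
  · -- lower bound
    rcases le_or_gt a (2 * Real.sqrt 2 - δ2) with hcase | hcase
    · have hprod : 2 * (a * ny) + ny ^ 2 ≤ 8 * Real.sqrt 2 * δ2 := by
        nlinarith only [mul_nonneg hA (sub_nonneg.2 hyb),
          mul_nonneg (sub_nonneg.2 hcase) hny0,
          mul_nonneg (sub_nonneg.2 hyb) (add_nonneg (by linarith only [hδ2.1.le] : (0:ℝ) ≤ 2 * δ2) hny0)]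
      linarith only [hprod, hgram, hexp, (abs_le.mp he1).1, (abs_le.mp he3).1, (abs_le.mp he4).1,
        (abs_le.mp hr).1, hwv, (abs_le.mp hvyb).2]
    · have hvsq2 : (2 * Real.sqrt 2 - δ2) ^ 2 ≤ a ^ 2 := by
        nlinarith only [mul_self_le_mul_self hA hcase.le]
      have hkey : 0 ≤ (1 - ω) * (a ^ 2 - (2 * Real.sqrt 2 - δ2) ^ 2) :=
        mul_nonneg (by linarith only [hω1.le]) (by linarith only [hvsq2])
      nlinarith only [hg0, (abs_le.mp hr).1, husq, hkey, hs2,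
        mul_nonneg (mul_nonneg hs2n hδ2.1.le) hω0,
        mul_nonneg hs2n hδ2.1.le, sq_nonneg δ2,
        mul_nonneg (sq_nonneg δ2) (by linarith only [hω1.le] : (0:ℝ) ≤ 1 - ω),
        hδ1.1.le, hδ3.1.le, hδ4.1.le, hwv]
  · -- upper bound
    linarith only [hgram, hexp, (abs_le.mp he1).2, (abs_le.mp he3).2, (abs_le.mp he4).2,
      (abs_le.mp hr).2, hwv, (abs_le.mp hvyb).1, hvy2, sq_nonneg ny, hg0]
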